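/- Let G be a split graph with clique K and independent set I, and suppose there exists a star T on vertex set I (a tree in which one vertex is adjacent to all others) such that for every v ∈ K, the set N_G(v) ∩ I induces a connected subgraph of T. Let G* be the graph obtained from G by adding two new vertices x and y, where x is adjacent to y and to every vertex of G, and y is adjacent only to x. Then there exists a star T' on vertex set I ∪ {y} such that for every v ∈ K ∪ {x}, the set N_{G*}(v) ∩ (I ∪ {y}) induces a connected subgraph of T'. -/

import Mathlib

/-- `D` is a dominating set of `G`: every vertex outside `D` has a neighbour in `D`. -/
def Dominates {V : Type*} (G : SimpleGraph V) (D : Set V) : Prop :=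
  ∀ u, u ∉ D → ∃ v ∈ D, G.Adj u v

/-- `S` is a secure dominating set of `G`. -/
def SecureDominates {V : Type*} (G : SimpleGraph V) (S : Set V) : Prop :=
  Dominates G S ∧
    ∀ u, u ∉ S → ∃ v ∈ S, G.Adj u v ∧ Dominates G ((S \ {v}) ∪ {u})

/-- The graph `G*` obtained from `G` by adding two new vertices
`x = Sum.inr 0` and `y = Sum.inr 1`, where `x` is adjacent to `y` and to every
vertex of `G`, and `y` is adjacent only to `x`. -/
def splitExt {V : Type*} (G : SimpleGraph V) : SimpleGraph (V ⊕ Fin 2) :=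
  SimpleGraph.fromRel (fun a b =>
    (∃ u v, a = Sum.inl u ∧ b = Sum.inl v ∧ G.Adj u v) ∨ b = Sum.inr 0)


lemma star_induce_connected_iff {W : Type*} (T : SimpleGraph W) (c : W)
    (hstar : ∀ a b, T.Adj a b ↔ (a = c ∧ b ≠ c) ∨ (b = c ∧ a ≠ c))
    (S : Set W) :
    (SimpleGraph.induce S T).Connected ↔
      S.Nonempty ∧ (c ∈ S ∨ ∀ a ∈ S, ∀ b ∈ S, a = b) := by
  constructor
  · intro h
    have hne : S.Nonempty := by
      obtain ⟨⟨a, ha⟩⟩ := h.nonempty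
      exact ⟨a, ha⟩
    refine ⟨hne, ?_⟩
    by_cases hc : c ∈ S
    · exact Or.inl hc
    · refine Or.inr fun a ha b hb => ?_
      by_contra hab
      obtain ⟨w⟩ := h.preconnected ⟨a, ha⟩ ⟨b, hb⟩
      cases w with
      | nil => exact hab rfl
      | cons hadj _ =>
        rcases (hstar _ _).mp hadj with ⟨h1, _⟩ | ⟨h1, _⟩
        · exact hc (h1 ▸ ha)
        · exact hc (h1 ▸ Subtype.coe_prop _)
  · rintro ⟨⟨a, ha⟩, hcase⟩
    haveI : Nonempty ↥S := ⟨⟨a, ha⟩⟩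
    cases hcase with
    | inl hc =>
      have key : ∀ u : ↥S, (SimpleGraph.induce S T).Reachable u ⟨c, hc⟩ := by
        intro u
        by_cases h : (u : W) = c
        · exact (Subtype.ext h : u = ⟨c, hc⟩) ▸ SimpleGraph.Reachable.refl u
        · exact SimpleGraph.Adj.reachable ((hstar _ _).mpr (Or.inr ⟨rfl, h⟩))
      exact ⟨fun u v => (key u).trans (key v).symm⟩
    | inr hsub =>
      refine ⟨fun u v => ?_⟩
      have : u = v := Subtype.ext (hsub _ u.2 _ v.2)
      rw [this]

lemma splitExt_adj_inl_inl {V : Type*} (G : SimpleGraph V) (u v : V) :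
    (splitExt G).Adj (Sum.inl u) (Sum.inl v) ↔ G.Adj u v := by
  simp only [splitExt, SimpleGraph.fromRel_adj, ne_eq, Sum.inl.injEq]
  constructor
  · rintro ⟨hne, h⟩
    rcases h with (⟨a, b, ha, hb, hab⟩ | h) | (⟨a, b, ha, hb, hab⟩ | h)
    · cases ha; cases hb; exact hab
    · exact absurd h (by simp)
    · cases ha; cases hb; exact hab.symm
    · exact absurd h (by simp)
  · intro h
    exact ⟨G.ne_of_adj h, Or.inl (Or.inl ⟨u, v, rfl, rfl, h⟩)⟩

lemma splitExt_not_adj_inl_inr1 {V : Type*} (G : SimpleGraph V) (u : V) :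
    ¬ (splitExt G).Adj (Sum.inl u) (Sum.inr 1) := by
  simp only [splitExt, SimpleGraph.fromRel_adj]
  rintro ⟨hne, h⟩
  rcases h with (⟨a, b, _, hb, _⟩ | h) | (⟨a, b, ha, _, _⟩ | h)
  · exact absurd hb (by simp)
  · exact absurd h (by simp)
  · exact absurd ha (by simp)
  · exact absurd h (by simp [Sum.inr.injEq])

lemma splitExt_adj_inr0 {V : Type*} (G : SimpleGraph V) (w : V ⊕ Fin 2)
    (h : w ≠ Sum.inr 0) : (splitExt G).Adj (Sum.inr 0) w := by
  exact (SimpleGraph.fromRel_adj _ _ _).mpr ⟨fun hh => h hh.symm, Or.inr (Or.inr rfl)⟩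

theorem splitExt_starConvex_on_independentSet {V : Type*} [Fintype V]
    (G : SimpleGraph V) (K I : Set V)
    (hpart : K ∪ I = Set.univ) (hdisj : Disjoint K I)
    (hK : G.IsClique K) (hI : ∀ a ∈ I, ∀ b ∈ I, ¬ G.Adj a b)
    -- there is a star `T` on `I` such that for every `v ∈ K`,
    -- `N_G(v) ∩ I` induces a connected subgraph of `T`
    (T : SimpleGraph ↥I) (c : ↥I)
    (hstar : ∀ a b, T.Adj a b ↔ (a = c ∧ b ≠ c) ∨ (b = c ∧ a ≠ c))
    (hconv : ∀ v ∈ K, (SimpleGraph.induce {w : ↥I | G.Adj v ↑w} T).Connected) :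
    -- then there is a star `T'` on `I ∪ {y}` such that for every `v ∈ K ∪ {x}`,
    -- `N_{G*}(v) ∩ (I ∪ {y})` induces a connected subgraph of `T'`
    ∃ T' : SimpleGraph ↥(Sum.inl '' I ∪ {Sum.inr 1} : Set (V ⊕ Fin 2)),
      ∃ c' : ↥(Sum.inl '' I ∪ {Sum.inr 1} : Set (V ⊕ Fin 2)),
        (∀ a b, T'.Adj a b ↔ (a = c' ∧ b ≠ c') ∨ (b = c' ∧ a ≠ c')) ∧
        ∀ v ∈ (Sum.inl '' K ∪ {Sum.inr 0} : Set (V ⊕ Fin 2)),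
          (SimpleGraph.induce
            {w : ↥(Sum.inl '' I ∪ {Sum.inr 1} : Set (V ⊕ Fin 2)) | (splitExt G).Adj v ↑w}
            T').Connected := by
  classical
  have hc' : Sum.inl (c : V) ∈ (Sum.inl '' I ∪ {Sum.inr 1} : Set (V ⊕ Fin 2)) :=
    Or.inl ⟨c, c.2, rfl⟩
  refine ⟨⟨fun a b => (a = ⟨Sum.inl ↑c, hc'⟩ ∧ b ≠ ⟨Sum.inl ↑c, hc'⟩) ∨
      (b = ⟨Sum.inl ↑c, hc'⟩ ∧ a ≠ ⟨Sum.inl ↑c, hc'⟩),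
      ⟨fun a b h => by tauto⟩, ⟨fun a h => by tauto⟩⟩,
    ⟨Sum.inl ↑c, hc'⟩, fun a b => Iff.rfl, ?_⟩
  rintro v (⟨k, hk, rfl⟩ | hv)
  · -- v = Sum.inl k, k ∈ K
    have hold := (star_induce_connected_iff T c hstar _).mp (hconv k hk)
    obtain ⟨⟨w0, hw0⟩, hcase⟩ := hold
    rw [star_induce_connected_iff _ _ (fun a b => Iff.rfl)]
    have extract : ∀ w : ↥(Sum.inl '' I ∪ {Sum.inr 1} : Set (V ⊕ Fin 2)),
        (splitExt G).Adj (Sum.inl k) ↑w →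
        ∃ u : V, ∃ hu : u ∈ I, (w : V ⊕ Fin 2) = Sum.inl u ∧ G.Adj k u := by
      rintro ⟨wv, hwv⟩ hw
      rcases hwv with ⟨u, hu, heq⟩ | heq
      · subst heq
        exact ⟨u, hu, rfl, (splitExt_adj_inl_inl G k u).mp hw⟩
      · rw [Set.mem_singleton_iff] at heq
        subst heq
        exact absurd hw (splitExt_not_adj_inl_inr1 G k)
    constructor
    · exact ⟨⟨Sum.inl ↑w0, Or.inl ⟨↑w0, w0.2, rfl⟩⟩,
        (splitExt_adj_inl_inl G k ↑w0).mpr hw0⟩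
    · cases hcase with
      | inl hcmem =>
        exact Or.inl ((splitExt_adj_inl_inl G k ↑c).mpr hcmem)
      | inr hsub =>
        refine Or.inr fun a ha b hb => ?_
        obtain ⟨u, hu, hau, hadju⟩ := extract a ha
        obtain ⟨u', hu', hbu, hadju'⟩ := extract b hb
        have huu : (⟨u, hu⟩ : ↥I) = ⟨u', hu'⟩ := hsub ⟨u, hu⟩ hadju ⟨u', hu'⟩ hadju'
        apply Subtype.ext
        rw [hau, hbu]
        exact congrArg Sum.inl (Subtype.ext_iff.mp huu)
  · -- v = Sum.inr 0
    rw [Set.mem_singleton_iff] at hv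
    subst hv
    rw [star_induce_connected_iff _ _ (fun a b => Iff.rfl)]
    have hmem : (⟨Sum.inl ↑c, hc'⟩ : ↥(Sum.inl '' I ∪ {Sum.inr 1} : Set (V ⊕ Fin 2))) ∈
        {w : ↥(Sum.inl '' I ∪ {Sum.inr 1} : Set (V ⊕ Fin 2)) | (splitExt G).Adj (Sum.inr 0) ↑w} :=
      splitExt_adj_inr0 G _ (by simp)
    exact ⟨⟨_, hmem⟩, Or.inl hmem⟩
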